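/- Let S be a sublinear monotone semigroup of bounded operators on a Banach lattice X such that each S(t) is Lipschitz with some constant L(t), and suppose −S(s)(−S(t)x) ≥ S(t)(−S(s)(−x)) for all s,t ≥ 0 and x ∈ X. Then the symmetric Lipschitz set D_L^s := {x : x ∈ D_L and −x ∈ D_L}, with D_L := {x : sup_{0<h≤h₀} ‖(S(h)x − x)/h‖ < ∞ for some h₀ > 0}, is invariant: S(t)x ∈ D_L^s for all t ≥ 0 and x ∈ D_L^s. -/

import Mathlib

/-- For a sublinear monotone semigroup of Lipschitz operators on a Banach lattice satisfying
`-S(s)(-S(t)x) ≥ S(t)(-S(s)(-x))`, the symmetric Lipschitz set `D_L^s` is invariant. -/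
theorem stmt13 {X : Type*} [NormedAddCommGroup X] [Lattice X] [IsOrderedAddMonoid X]
    [HasSolidNorm X] [NormedSpace ℝ X] [PosSMulStrictMono ℝ X] [PosSMulReflectLT ℝ X]
    [CompleteSpace X] (S : ℝ → X → X)
    (h0 : ∀ x, S 0 x = x)
    (hsg : ∀ s t : ℝ, 0 ≤ s → 0 ≤ t → ∀ x, S (s + t) x = S t (S s x))
    (hsub : ∀ t : ℝ, 0 ≤ t → ∀ x y : X, S t (x + y) ≤ S t x + S t y)
    (hhom : ∀ t : ℝ, 0 ≤ t → ∀ l : ℝ, 0 < l → ∀ x, S t (l • x) = l • S t x)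
    (hmono : ∀ t : ℝ, 0 ≤ t → Monotone (S t))
    (hlip : ∀ t : ℝ, 0 ≤ t → ∃ L : ℝ, ∀ x y : X, ‖S t x - S t y‖ ≤ L * ‖x - y‖)
    (hcond : ∀ s t : ℝ, 0 ≤ s → 0 ≤ t → ∀ x : X,
      S t (-(S s (-x))) ≤ -(S s (-(S t x))))
    (x : X)
    (hx : ∃ h₀ > (0 : ℝ), ∃ C : ℝ, ∀ h : ℝ, 0 < h → h ≤ h₀ → ‖S h x - x‖ ≤ C * h)
    (hx' : ∃ h₀ > (0 : ℝ), ∃ C : ℝ, ∀ h : ℝ, 0 < h → h ≤ h₀ → ‖S h (-x) - (-x)‖ ≤ C * h)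
    (t : ℝ) (ht : 0 ≤ t) :
    (∃ h₀ > (0 : ℝ), ∃ C : ℝ, ∀ h : ℝ, 0 < h → h ≤ h₀ →
      ‖S h (S t x) - S t x‖ ≤ C * h) ∧
    (∃ h₀ > (0 : ℝ), ∃ C : ℝ, ∀ h : ℝ, 0 < h → h ≤ h₀ →
      ‖S h (-(S t x)) - (-(S t x))‖ ≤ C * h) := by
  obtain ⟨L, hL⟩ := hlip t ht
  set L' : ℝ := max L 0 with hL'def
  have hL'0 : 0 ≤ L' := le_max_right _ _
  have hL' : ∀ x y : X, ‖S t x - S t y‖ ≤ L' * ‖x - y‖ := fun a b =>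
    (hL a b).trans (mul_le_mul_of_nonneg_right (le_max_left _ _) (norm_nonneg _))
  -- S u 0 = 0 for all u ≥ 0
  have hzero : ∀ u : ℝ, 0 ≤ u → S u 0 = 0 := by
    intro u hu
    have h2 := hhom u hu 2 (by norm_num) 0
    rw [smul_zero, two_smul] at h2
    exact left_eq_add.mp h2
  obtain ⟨h₁, h₁pos, C1, hC1⟩ := hx
  obtain ⟨h₂, h₂pos, C2, hC2⟩ := hx'
  constructor
  · refine ⟨h₁, h₁pos, L' * C1, fun h hh hle => ?_⟩
    have hh' : 0 ≤ h := le_of_lt hh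
    have e1 : S h (S t x) = S t (S h x) := by
      have a := hsg t h ht hh' x
      have b := hsg h t hh' ht x
      rw [add_comm] at a
      rw [← a, b]
    rw [e1, mul_assoc]
    calc ‖S t (S h x) - S t x‖ ≤ L' * ‖S h x - x‖ := hL' _ _
      _ ≤ L' * (C1 * h) := mul_le_mul_of_nonneg_left (hC1 h hh hle) hL'0
  · refine ⟨min h₁ h₂, lt_min h₁pos h₂pos, L' * C1 + L' * C2, fun h hh hle => ?_⟩
    have hh' : 0 ≤ h := le_of_lt hh
    have hle1 : h ≤ h₁ := hle.trans (min_le_left _ _)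
    have hle2 : h ≤ h₂ := hle.trans (min_le_right _ _)
    set u : X := S t (S h x - x) with hu
    set v : X := S t (S h (-x) + x) with hv
    set y : X := S h (-(S t x)) + S t x with hy
    have e1 : S h (S t x) = S t (S h x) := by
      have a := hsg t h ht hh' x
      have b := hsg h t hh' ht x
      rw [add_comm] at a
      rw [← a, b]
    -- lower bound : -u ≤ y
    have a1 : S t (S h x) ≤ u + S t x := by
      have := hsub t ht (S h x - x) x
      rwa [sub_add_cancel] at this
    have a2 : (0 : X) ≤ S h (S t x) + S h (-(S t x)) := by
      have := hsub h hh' (S t x) (-(S t x))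
      rwa [add_neg_cancel, hzero h hh'] at this
    have a3 : -(S h (-(S t x))) ≤ u + S t x := by
      have : -(S h (-(S t x))) ≤ S h (S t x) := by
        rw [neg_le_iff_add_nonneg]; exact a2
      exact this.trans (e1 ▸ a1)
    have lower : -u ≤ y := by
      have h4 : -(u + S t x) ≤ S h (-(S t x)) := neg_le.mp a3
      rw [neg_add, ← sub_eq_add_neg] at h4
      rw [hy]
      exact (sub_le_iff_le_add).mp h4
    -- upper bound : y ≤ v
    have b1 : S h (-(S t x)) ≤ -(S t (-(S h (-x)))) := le_neg.mp (hcond h t hh' ht x)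
    have b2 : S t x ≤ v + S t (-(S h (-x))) := by
      have e : (S h (-x) + x) + -(S h (-x)) = x := by abel
      have := hsub t ht (S h (-x) + x) (-(S h (-x)))
      rwa [e] at this
    have upper : y ≤ v := by
      have := add_le_add b1 b2
      rw [hy]
      calc S h (-(S t x)) + S t x ≤ -(S t (-(S h (-x)))) + (v + S t (-(S h (-x)))) := this
        _ = v := by abel
    -- norm bounds on u and v
    have hun : ‖u‖ ≤ L' * (C1 * h) := by
      have := hL' (S h x - x) 0
      rw [hzero t ht, sub_zero, sub_zero] at this
      exact this.trans (mul_le_mul_of_nonneg_left (hC1 h hh hle1) hL'0)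
    have hvn : ‖v‖ ≤ L' * (C2 * h) := by
      have := hL' (S h (-x) + x) 0
      rw [hzero t ht, sub_zero, sub_zero] at this
      have hC2' : ‖S h (-x) + x‖ ≤ C2 * h := by
        have h5 := hC2 h hh hle2
        rwa [sub_neg_eq_add] at h5
      exact this.trans (mul_le_mul_of_nonneg_left hC2' hL'0)
    -- combine via solid norm
    have habs : |y| ≤ |u| + |v| := by
      rw [abs_le']
      constructor
      · exact upper.trans ((le_abs_self v).trans (le_add_of_nonneg_left (abs_nonneg u)))
      · have : -y ≤ u := neg_le.mpr (by simpa using lower)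
        exact this.trans ((le_abs_self u).trans (le_add_of_nonneg_right (abs_nonneg v)))
    have hyn : ‖y‖ ≤ ‖u‖ + ‖v‖ := by
      calc ‖y‖ ≤ ‖|u| + |v|‖ := by
            apply norm_le_norm_of_abs_le_abs
            rwa [abs_of_nonneg (add_nonneg (abs_nonneg u) (abs_nonneg v))]
        _ ≤ ‖|u|‖ + ‖|v|‖ := norm_add_le _ _
        _ = ‖u‖ + ‖v‖ := by rw [norm_abs_eq_norm, norm_abs_eq_norm]
    have e2 : S h (-(S t x)) - (-(S t x)) = y := by rw [hy]; abel
    rw [e2]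
    calc ‖y‖ ≤ ‖u‖ + ‖v‖ := hyn
      _ ≤ L' * (C1 * h) + L' * (C2 * h) := add_le_add hun hvn
      _ = (L' * C1 + L' * C2) * h := by ring
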